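/- Let M, a, s be positive integers with M > 1 such that ∑_{i=0}^{M-1} (a+i)^2 = s^2, and suppose M = 24·m₁ + 16 for a nonnegative integer m₁. Then: (i) m₁ ≢ 1 (mod 4); (ii) for every even integer α ≥ 4, m₁ ≢ 2·(2^(α-4) − 1)/3 (mod 2^(α-1)); and (iii) for every odd integer α ≥ 5, m₁ ≢ 2·(5·2^(α-4) − 1)/3 (mod 2^(α-1)). (In cases (ii) and (iii) the displayed residues are integers, since 2^(α-4) ≡ 1 (mod 3) for α even and 5·2^(α-4) ≡ 1 (mod 3) for α odd.) -/

import Mathlib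

lemma sumsq (a n : ℕ) :
    6 * ∑ i ∈ Finset.range (n+1), (a+i)^2 = (n+1)*(6*a^2+6*a*n+n*(2*n+1)) := by
  induction n with
  | zero => simp [Finset.sum_range_one]
  | succ n ih =>
    rw [Finset.sum_range_succ, Nat.mul_add, ih]
    ring

lemma two_adic : ∀ i : ℕ, ∀ {j x y : ℕ}, x % 2 = 1 → y % 2 = 1 →
    2^i*x = 2^j*y → x = y := by
  intro i
  induction i with
  | zero =>
    intro j x y hx hy h
    simp at h
    cases j with
    | zero => simpa using h
    | succ j =>
      exfalso
      have h2 : 2 ∣ x := ⟨2^j*y, by rw [h, pow_succ]; ring⟩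
      omega
  | succ i ih =>
    intro j x y hx hy h
    cases j with
    | zero =>
      exfalso
      simp at h
      have h2 : 2 ∣ y := ⟨2^i*x, by rw [← h, pow_succ]; ring⟩
      omega
    | succ j =>
      apply ih hx hy
      have h' : 2*(2^i*x) = 2*(2^j*y) := by
        calc 2*(2^i*x) = 2^(i+1)*x := by rw [pow_succ]; ring
        _ = 2^(j+1)*y := h
        _ = 2*(2^j*y) := by rw [pow_succ]; ring
      exact Nat.eq_of_mul_eq_mul_left (by norm_num) h'

lemma lemC (s v α : ℕ) (hα : 3 ≤ α) (hv : v % 4 = 3) (h : s^2 = 2^(α-1)*v) :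
    False := by
  have hs0 : s ≠ 0 := by
    intro h0
    subst h0
    have h1 : 0 < 2^(α-1) := pow_pos (by norm_num) _
    have h2 : 0 < v := by omega
    have h3 := Nat.mul_pos h1 h2
    norm_num at h
    omega
  obtain ⟨b, t, hb, hst⟩ := Nat.exists_eq_pow_mul_and_not_dvd hs0 2 (by norm_num)
  subst hst
  have ht : t % 2 = 1 := by omega
  have heq : 2^(2*b)*(t*t) = 2^(α-1)*v := by
    rw [← h, mul_pow, ← pow_mul, mul_comm b 2, pow_two]
  have htt : (t*t) % 2 = 1 := by rw [Nat.mul_mod, ht]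
  have hv2 : v % 2 = 1 := by omega
  have htv : t*t = v := two_adic (2*b) htt hv2 heq
  obtain ⟨c, rfl⟩ : ∃ c, t = 2*c+1 := ⟨t/2, by omega⟩
  have hsq : (2*c+1)*(2*c+1) = 4*(c*c+c)+1 := by ring
  rw [hsq] at htv
  obtain ⟨d, hd⟩ : ∃ d, c*c+c = d := ⟨_, rfl⟩
  rw [hd] at htv
  omega

lemma lemE (a s m₁ α u : ℕ) (hα : 3 ≤ α) (hu : u % 4 = 1)
    (hM : 24*m₁+16 = 2^α*u)
    (hsum : ∑ i ∈ Finset.range (24*m₁+16), (a+i)^2 = s^2) : False := by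
  set n := 24*m₁+15 with hn
  have hrange : 24*m₁+16 = n+1 := by omega
  rw [hrange] at hsum
  set X := n*(2*n+1) with hXdef
  have h6 : 6*s^2 = (n+1)*(6*a^2+6*a*n+X) := by
    rw [hXdef, ← hsum, sumsq]
  have hpar : a % 2 = 0 ∨ (a+n) % 2 = 0 := by omega
  obtain ⟨p, hp⟩ : ∃ p, a*(a+n) = 2*p := by
    rcases hpar with hh | hh
    · obtain ⟨b, rfl⟩ : ∃ b, a = 2*b := ⟨a/2, by omega⟩
      exact ⟨b*(2*b+n), by ring⟩
    · obtain ⟨b, hb⟩ : ∃ b, a+n = 2*b := ⟨(a+n)/2, by omega⟩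
      exact ⟨a*b, by rw [hb]; ring⟩
  have hX9 : X % 12 = 9 := by
    rw [hXdef, Nat.mul_mod]
    have h1 : n % 12 = 3 := by omega
    have h2 : (2*n+1) % 12 = 7 := by omega
    rw [h1, h2]
  have hKeq : 6*a^2+6*a*n+X = 12*p+X := by
    rw [show 6*a^2+6*a*n = 6*(a*(a+n)) from by ring, hp]
    ring
  rw [hKeq] at h6
  obtain ⟨w, hw3, hw4⟩ : ∃ w, 12*p+X = 3*w ∧ w % 4 = 3 :=
    ⟨(12*p+X)/3, by omega, by omega⟩
  rw [hw3] at h6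
  have hM' : n+1 = 2^α*u := by omega
  rw [hM'] at h6
  have h2s : 2*s^2 = 2^α*(u*w) := by
    apply Nat.eq_of_mul_eq_mul_left (show 0 < 3 by norm_num)
    calc 3*(2*s^2) = 6*s^2 := by ring
    _ = 2^α*u*(3*w) := h6
    _ = 3*(2^α*(u*w)) := by ring
  have hpow : 2*2^(α-1) = 2^α := by
    rw [← pow_succ']
    congr 1
    omega
  have hs2 : s^2 = 2^(α-1)*(u*w) := by
    apply Nat.eq_of_mul_eq_mul_left (show 0 < 2 by norm_num)
    calc 2*s^2 = 2^α*(u*w) := h2s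
    _ = 2*(2^(α-1)*(u*w)) := by rw [← hpow]; ring
  have huw : (u*w) % 4 = 3 := by rw [Nat.mul_mod, hu, hw4]
  exact lemC s (u*w) α hα huw hs2

theorem stmt (M a s m₁ : ℕ) (hM : 1 < M) (ha : 1 ≤ a) (hs : 1 ≤ s)
    (hsum : ∑ i ∈ Finset.range M, (a + i) ^ 2 = s ^ 2)
    (hMeq : M = 24 * m₁ + 16) :
    ¬ m₁ % 4 = 1 ∧
      (∀ α : ℕ, 4 ≤ α → Even α → ¬ m₁ ≡ 2 * (2 ^ (α - 4) - 1) / 3 [MOD 2 ^ (α - 1)]) ∧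
      (∀ α : ℕ, 5 ≤ α → Odd α → ¬ m₁ ≡ 2 * (5 * 2 ^ (α - 4) - 1) / 3 [MOD 2 ^ (α - 1)]) := by
  subst hMeq
  refine ⟨?_, ?_, ?_⟩
  · intro h1
    refine lemE a s m₁ 3 (12*(m₁/4)+5) (by norm_num) (by omega) ?_ hsum
    have h8 : (2:ℕ)^3 = 8 := by norm_num
    rw [h8]
    omega
  · intro α hα4 heven h
    obtain ⟨γ, hγ⟩ : ∃ γ, α - 4 = 2*γ := by
      obtain ⟨k, hk⟩ := heven
      exact ⟨k-2, by omega⟩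
    have hm3 : 2^(α-4) % 3 = 1 := by
      rw [hγ, pow_mul]
      norm_num [Nat.pow_mod]
    obtain ⟨c, hc⟩ : ∃ c, 2^(α-4) = 3*c+1 := ⟨2^(α-4)/3, by omega⟩
    have hr : 2*(2^(α-4)-1)/3 = 2*c := by omega
    rw [hr] at h
    have h8 : 2^(α-1) = 8*2^(α-4) := by
      rw [show α-1 = 3+(α-4) from by omega, pow_add]
      norm_num
    have h16 : 2^α = 16*2^(α-4) := by
      rw [show α = 4+(α-4) from by omega, pow_add]
      norm_num
    have hlt : 2*c < 2^(α-1) := by omega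
    have hmod : m₁ % 2^(α-1) = 2*c := by
      have h' : m₁ % 2^(α-1) = (2*c) % 2^(α-1) := h
      rw [Nat.mod_eq_of_lt hlt] at h'
      exact h'
    obtain ⟨q, hq⟩ : ∃ q, m₁ = 2^(α-1)*q + 2*c :=
      ⟨m₁/2^(α-1), by rw [← hmod]; exact (Nat.div_add_mod m₁ (2^(α-1))).symm⟩
    refine lemE a s m₁ α (12*q+1) (by omega) (by omega) ?_ hsum
    rw [hq, h8, h16]
    have hexp : 16*2^(α-4)*(12*q+1) = 192*(2^(α-4)*q) + 16*(2^(α-4)) := by ring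
    rw [hexp, hc]
    ring
  · intro α hα5 hodd h
    obtain ⟨γ, hγ⟩ : ∃ γ, α - 4 = 2*γ+1 := by
      obtain ⟨k, hk⟩ := hodd
      exact ⟨k-2, by omega⟩
    have hm3 : 2^(α-4) % 3 = 2 := by
      rw [hγ, pow_succ, pow_mul, Nat.mul_mod]
      norm_num [Nat.pow_mod]
    obtain ⟨c, hc⟩ : ∃ c, 5*2^(α-4) = 3*c+1 := ⟨(5*2^(α-4))/3, by omega⟩
    have hr : 2*(5*2^(α-4)-1)/3 = 2*c := by omega
    rw [hr] at h
    have h8 : 2^(α-1) = 8*2^(α-4) := by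
      rw [show α-1 = 3+(α-4) from by omega, pow_add]
      norm_num
    have h16 : 2^α = 16*2^(α-4) := by
      rw [show α = 4+(α-4) from by omega, pow_add]
      norm_num
    have hlt : 2*c < 2^(α-1) := by omega
    have hmod : m₁ % 2^(α-1) = 2*c := by
      have h' : m₁ % 2^(α-1) = (2*c) % 2^(α-1) := h
      rw [Nat.mod_eq_of_lt hlt] at h'
      exact h'
    obtain ⟨q, hq⟩ : ∃ q, m₁ = 2^(α-1)*q + 2*c :=
      ⟨m₁/2^(α-1), by rw [← hmod]; exact (Nat.div_add_mod m₁ (2^(α-1))).symm⟩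
    refine lemE a s m₁ α (12*q+5) (by omega) (by omega) ?_ hsum
    rw [hq, h8, h16]
    have hexp : 16*2^(α-4)*(12*q+5) = 192*(2^(α-4)*q) + 16*(5*2^(α-4)) := by ring
    rw [hexp, hc]
    ring
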